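/- Let n ≥ 1 and let B ∈ ℝ^{n×n} be nonsingular and cyclic (minimal polynomial equals characteristic polynomial), with characteristic polynomial splitting over ℝ and every root of the minimal polynomial having multiplicity at most two in the minimal polynomial. Then for every ξ ∈ ℝⁿ with det[ξ, Bξ, …, B^{n−1}ξ] ≠ 0 there exists ρ > 0 such that every η ∈ ℝⁿ with ‖η − ξ‖ < ρ can be reached from ξ: that is, ξ can be steered to η in the system x(k+1) = (I + u(k)B)x(k). -/

import Mathlib

set_option synthInstance.maxHeartbeats 1000000
set_option maxHeartbeats 1000000


open Matrix MeasureTheory Polynomial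

/-- The product `(I + u(l-1)B) ⋯ (I + u(1)B)(I + u(0)B)`. -/
noncomputable def prodCtrl {n : ℕ} (B : Matrix (Fin n) (Fin n) ℝ) (l : ℕ) (u : ℕ → ℝ) :
    Matrix (Fin n) (Fin n) ℝ :=
  ((List.range l).reverse.map fun k => (1 : Matrix (Fin n) (Fin n) ℝ) + u k • B).prod

/-- `ξ` can be steered to `η` in the system `x(k+1) = (I + u(k)B) x(k)`. -/
noncomputable def steers {n : ℕ} (B : Matrix (Fin n) (Fin n) ℝ) (ξ η : Fin n → ℝ) : Prop :=
  ∃ l : ℕ, 1 ≤ l ∧ ∃ u : ℕ → ℝ, (prodCtrl B l u).mulVec ξ = η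

/-- Near-controllability: outside two Lebesgue-null sets, any state can be steered to any state. -/
noncomputable def nearlyControllable {n : ℕ} (B : Matrix (Fin n) (Fin n) ℝ) : Prop :=
  ∃ E F : Set (Fin n → ℝ), volume E = 0 ∧ volume F = 0 ∧
    ∀ ξ ∉ E, ∀ η ∉ F, steers B ξ η

/-- The matrix `[ξ, Bξ, B²ξ, …, B^{n-1}ξ]`. -/
noncomputable def ctrlMat {n : ℕ} (B : Matrix (Fin n) (Fin n) ℝ) (ξ : Fin n → ℝ) :
    Matrix (Fin n) (Fin n) ℝ :=
  Matrix.of fun i j => (B ^ (j : ℕ)).mulVec ξ i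

/-- The `N × N` Jordan block with eigenvalue `lam`. -/
def jordanBlock (N : ℕ) (lam : ℝ) : Matrix (Fin N) (Fin N) ℝ :=
  Matrix.of fun i j => if i = j then lam else if (j : ℕ) = (i : ℕ) + 1 then 1 else 0

/-- Block-diagonal Jordan matrix: `r` two-dimensional Jordan blocks with eigenvalues
`lam 0, …, lam (r-1)` followed by `1 × 1` blocks `lam r, …, lam (m-1)` (so `n = m + r`). -/
def pairJordan (n r : ℕ) (lam : ℕ → ℝ) : Matrix (Fin n) (Fin n) ℝ :=
  Matrix.of fun i j =>
    if (i : ℕ) = (j : ℕ) then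
      (if (i : ℕ) < 2 * r then lam ((i : ℕ) / 2) else lam ((i : ℕ) - r))
    else if (j : ℕ) = (i : ℕ) + 1 ∧ (i : ℕ) < 2 * r ∧ (i : ℕ) % 2 = 0 then 1 else 0



namespace Stmt6Aux

open Finset

noncomputable def psi {n : ℕ} (M : Matrix (Fin n) (Fin n) ℝ) :
    (Fin n → ℝ) →L[ℝ] (Fin n → ℝ) :=
  LinearMap.toContinuousLinearMap M.mulVecLin

lemma psi_apply {n : ℕ} (M : Matrix (Fin n) (Fin n) ℝ) (v : Fin n → ℝ) :
    psi M v = M.mulVec v := rfl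

lemma psi_mul {n : ℕ} (M N : Matrix (Fin n) (Fin n) ℝ) :
    psi (M * N) = psi M * psi N := by
  ext v i
  simp [psi_apply, Matrix.mulVec_mulVec]

lemma psi_one {n : ℕ} : psi (1 : Matrix (Fin n) (Fin n) ℝ) = 1 := by
  ext v i; simp [psi_apply]

lemma psi_add {n : ℕ} (M N : Matrix (Fin n) (Fin n) ℝ) : psi (M + N) = psi M + psi N := by
  ext v i; simp [psi_apply, Matrix.add_mulVec]

lemma psi_smul {n : ℕ} (r : ℝ) (M : Matrix (Fin n) (Fin n) ℝ) : psi (r • M) = r • psi M := by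
  ext v i; simp [psi_apply, Matrix.smul_mulVec]

lemma aeval_one_add_C_mul_X {n : ℕ} (B : Matrix (Fin n) (Fin n) ℝ) (r : ℝ) :
    aeval B (1 + C r * X) = 1 + r • B := by
  rw [map_add, _root_.map_mul, aeval_X, aeval_C, _root_.map_one, Algebra.algebraMap_eq_smul_one,
    smul_mul_assoc, one_mul]

lemma prodCtrl_eq_aeval {n : ℕ} (B : Matrix (Fin n) (Fin n) ℝ) (l : ℕ) (u : ℕ → ℝ) :
    prodCtrl B l u = aeval B (∏ k ∈ Finset.range l, (1 + C (u k) * X)) := by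
  induction l with
  | zero => simp [prodCtrl]
  | succ l ih =>
    have h1 : prodCtrl B (l+1) u = (1 + u l • B) * prodCtrl B l u := by
      simp [prodCtrl, List.range_succ]
    rw [h1, ih, Finset.prod_range_succ, _root_.map_mul, aeval_one_add_C_mul_X]
    have : Commute (aeval B (∏ k ∈ Finset.range l, (1 + C (u k) * X))) (1 + u l • B) := by
      rw [← aeval_one_add_C_mul_X]
      rw [Commute, SemiconjBy, ← _root_.map_mul, ← _root_.map_mul, mul_comm]
    exact this.symm.eq

lemma IND {n : ℕ} (B : Matrix (Fin n) (Fin n) ℝ) (c : ℕ → ℝ)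
    (g : ℕ → ((Fin n → ℝ) →L[ℝ] ℝ)) (l : ℕ) :
    HasStrictFDerivAt
      (fun a : Fin n → ℝ =>
        psi (aeval B (∏ k ∈ Finset.range l, (1 + C (c k + g k a) * X))))
      (∑ k ∈ Finset.range l, (g k).smulRight
        (psi (aeval B (X * ∏ j ∈ (Finset.range l).erase k, (1 + C (c j) * X)))))
      0 := by
  induction l with
  | zero =>
    simp only [Finset.range_zero, Finset.prod_empty, Finset.sum_empty, _root_.map_one, psi_one]
    exact hasStrictFDerivAt_const _ _
  | succ l ih =>
    set TB : (Fin n → ℝ) →L[ℝ] (Fin n → ℝ) := psi B with hTB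
    have hfun : (fun a : Fin n → ℝ =>
        psi (aeval B (∏ k ∈ Finset.range (l+1), (1 + C (c k + g k a) * X))))
        = fun a => (psi (aeval B (∏ k ∈ Finset.range l, (1 + C (c k + g k a) * X))))
            * ((1 + c l • TB) + (g l a) • TB) := by
      funext a
      rw [Finset.prod_range_succ, _root_.map_mul, psi_mul]
      congr 1
      rw [aeval_one_add_C_mul_X, psi_add, psi_one, psi_smul, add_smul, add_assoc, hTB]
    rw [hfun]
    have hface : HasStrictFDerivAt
        (fun a : Fin n → ℝ => (1 + c l • TB) + (g l a) • TB)
        ((g l).smulRight TB) 0 := by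
      have h1 := (((g l).smulRight TB).hasStrictFDerivAt (x := (0 : Fin n → ℝ))).const_add
        (1 + c l • TB)
      simpa only [ContinuousLinearMap.smulRight_apply] using h1
    have hmul := ih.mul' hface
    have hS : (1 : (Fin n → ℝ) →L[ℝ] (Fin n → ℝ)) + c l • TB
        = psi (aeval B (1 + C (c l) * X)) := by
      rw [aeval_one_add_C_mul_X, psi_add, psi_one, psi_smul, hTB]
    have hDeq : (psi (aeval B (∏ k ∈ Finset.range l, (1 + C (c k + g k 0) * X)))) •
          ((g l).smulRight TB)
        + (∑ k ∈ Finset.range l, (g k).smulRight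
            (psi (aeval B (X * ∏ j ∈ (Finset.range l).erase k,
              (1 + C (c j) * X))))).smulRight ((1 + c l • TB) + (g l) 0 • TB)
        = ∑ k ∈ Finset.range (l+1), (g k).smulRight
            (psi (aeval B (X * ∏ j ∈ (Finset.range (l+1)).erase k, (1 + C (c j) * X)))) := by
      have hg0 : ∀ k, c k + g k (0 : Fin n → ℝ) = c k := by
        intro k; rw [map_zero, add_zero]
      have herl : (Finset.range (l+1)).erase l = Finset.range l := by
        rw [Finset.range_add_one, Finset.erase_insert Finset.notMem_range_self]
      refine ContinuousLinearMap.ext (fun a => ?_)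
      simp only [ContinuousLinearMap.add_apply, ContinuousLinearMap.coe_sum',
        Finset.sum_apply, ContinuousLinearMap.smulRight_apply,
        ContinuousLinearMap.smul_apply, map_zero, zero_smul, add_zero, hg0]
      rw [Finset.sum_range_succ, Finset.sum_smul, add_comm]
      congr 1
      · refine Finset.sum_congr rfl (fun k hk => ?_)
        have hkl : k ≠ l := (Finset.mem_range.1 hk).ne
        have he : (Finset.range (l+1)).erase k = insert l ((Finset.range l).erase k) := by
          rw [Finset.range_add_one, Finset.erase_insert_of_ne (Ne.symm hkl)]
        rw [smul_assoc, smul_eq_mul, hS, ← psi_mul, ← _root_.map_mul, he,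
          Finset.prod_insert
            (fun hmem => Finset.notMem_range_self (Finset.mem_of_mem_erase hmem)),
          show (X * ∏ j ∈ (Finset.range l).erase k, (1 + C (c j) * X)) * (1 + C (c l) * X)
            = X * ((1 + C (c l) * X) * ∏ j ∈ (Finset.range l).erase k, (1 + C (c j) * X))
            from by ring]
      · rw [herl, smul_comm, smul_eq_mul, hTB, ← psi_mul]
        congr 1
        rw [show X * ∏ k ∈ Finset.range l, (1 + C (c k) * X)
            = (∏ k ∈ Finset.range l, (1 + C (c k) * X)) * X from by ring,
          _root_.map_mul, aeval_X]
    rw [← hDeq]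
    exact hmul


lemma eq_prod_of_roots {D : ℕ} (p : ℝ[X]) (hp : p.Monic) (hdeg : p.natDegree = D)
    (v : Fin D → ℝ) (hv : Function.Injective v) (hroot : ∀ i, p.eval (v i) = 0) :
    p = ∏ i, (X - C (v i)) := by
  have hdvd : (∏ i, (X - C (v i))) ∣ p :=
    Finset.prod_dvd_of_coprime ((pairwise_coprime_X_sub_C hv).set_pairwise _)
      (fun i _ => (dvd_iff_isRoot).2 (hroot i))
  obtain ⟨w, hw⟩ := hdvd
  have hm2 : (∏ i : Fin D, (X - C (v i))).Monic :=
    monic_prod_of_monic _ _ (fun i _ => monic_X_sub_C _)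
  have hd2 : (∏ i : Fin D, (X - C (v i))).natDegree = D := by
    rw [natDegree_prod _ _ (fun i _ => X_sub_C_ne_zero _)]
    simp
  have hw0 : w ≠ 0 := by
    rintro rfl; rw [mul_zero] at hw; exact hp.ne_zero hw
  have hdw : w.natDegree = 0 := by
    have := hdeg ▸ hw ▸ natDegree_mul hm2.ne_zero hw0
    omega
  have hwm : w.Monic := by
    have : p.leadingCoeff = (∏ i : Fin D, (X - C (v i))).leadingCoeff * w.leadingCoeff := by
      rw [hw, leadingCoeff_mul]
    rw [hp.leadingCoeff, hm2.leadingCoeff, one_mul] at this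
    exact this.symm
  have : w = 1 := hwm.natDegree_eq_zero.mp hdw
  rw [hw, this, mul_one]


lemma exists_controls (χ : ℝ[X]) (hm : χ.Monic) (hdeg : 1 ≤ χ.natDegree)
    (h0 : χ.eval 0 ≠ 0) (hsplit : (χ.map (RingHom.id ℝ)).Splits)
    (hmult : ∀ μ : ℝ, χ.rootMultiplicity μ ≤ 2) :
    ∃ (l : ℕ) (c : ℕ → ℝ), χ.natDegree < l ∧ (∀ k < l, c k ≠ 0) ∧
      (∀ j < l, ∀ k < l, j ≠ k → c j ≠ c k) ∧
      χ ∣ (∏ k ∈ Finset.range l, (1 + C (c k) * X)) - 1 := by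
  classical
  set T : Finset ℝ := χ.roots.toFinset with hT
  set T' : Finset ℝ := insert 0 T with hT'
  set D : ℕ := T'.card with hD
  have hDpos : 0 < D := Finset.card_pos.2 ⟨0, Finset.mem_insert_self _ _⟩
  have h0T : (0:ℝ) ∉ T := by
    intro hmem
    exact h0 ((mem_roots (hm.ne_zero)).1 (Multiset.mem_toFinset.1 hmem))
  set ρ : Fin D ≃o {x // x ∈ T'} := T'.orderIsoOfFin hD.symm with hρ
  set ρ' : Fin D → ℝ := fun i => (ρ i : ℝ) with hρ'
  have hρmono : StrictMono ρ' := fun i j hij => by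
    exact_mod_cast ρ.strictMono hij
  have hρinj : Function.Injective ρ' := hρmono.injective
  have hρmem : ∀ i, ρ' i ∈ T' := fun i => (ρ i).2
  set h : ℝ[X] := ∏ i : Fin D, (X - C (ρ' i)) with hh
  have hhmonic : h.Monic := monic_prod_of_monic _ _ (fun i _ => monic_X_sub_C _)
  have hhdeg : h.natDegree = D := by
    rw [hh, natDegree_prod _ _ (fun i _ => X_sub_C_ne_zero _)]; simp
  have hhT' : h = ∏ lam ∈ T', (X - C lam) := by
    rw [hh, ← Finset.prod_coe_sort T' (fun lam => (X - C lam))]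
    exact Fintype.prod_equiv ρ.toEquiv _ _ (fun i => rfl)
  -- χ divides h * h
  have hχfact : χ = ∏ lam ∈ T, (X - C lam) ^ (χ.roots.count lam) := by
    conv_lhs => rw [(by rwa [Polynomial.map_id] at hsplit : χ.Splits).eq_prod_roots_of_monic hm]
    rw [Finset.prod_multiset_map_count]
  have hcount2 : ∀ lam : ℝ, χ.roots.count lam ≤ 2 := by
    intro lam; rw [count_roots]; exact hmult lam
  have hdvd : χ ∣ h * h := by
    have d1 : χ ∣ ∏ lam ∈ T, (X - C lam) ^ 2 := by
      rw [hχfact]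
      exact Finset.prod_dvd_prod_of_dvd _ _ (fun lam _ => pow_dvd_pow _ (hcount2 lam))
    have d2 : (∏ lam ∈ T, (X - C lam) ^ 2) ∣ ∏ lam ∈ T', (X - C lam) ^ 2 :=
      Finset.prod_dvd_prod_of_subset _ _ _ (Finset.subset_insert _ _)
    have e3 : (∏ lam ∈ T', (X - C lam) ^ 2) = h * h := by
      rw [hhT', ← Finset.prod_mul_distrib]
      exact Finset.prod_congr rfl (fun lam _ => sq (X - C lam))
    exact d1.trans (e3 ▸ d2)
  -- degree bound
  have hdegD : χ.natDegree < D + D := by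
    have h1 : χ.natDegree ≤ ∑ lam ∈ T, ((X - C lam) ^ (χ.roots.count lam)).natDegree := by
      conv_lhs => rw [hχfact]
      exact natDegree_prod_le _ _
    have h2 : ∀ lam ∈ T, ((X - C lam) ^ (χ.roots.count lam)).natDegree ≤ 2 := by
      intro lam _
      rw [natDegree_pow, natDegree_X_sub_C, mul_one]; exact hcount2 lam
    have h3 : χ.natDegree ≤ 2 * T.card := by
      calc χ.natDegree ≤ _ := h1
        _ ≤ ∑ lam ∈ T, 2 := Finset.sum_le_sum h2
        _ = 2 * T.card := by rw [Finset.sum_const, smul_eq_mul, mul_comm]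
    have h4 : D = T.card + 1 := by rw [hD, hT', Finset.card_insert_of_notMem h0T]
    omega
  -- eval lemmas
  have hval : ∀ x : ℝ, eval x h = ∏ j, (x - ρ' j) := by
    intro x; rw [hh, eval_prod]; simp
  have hzero : eval (0:ℝ) h = 0 := by
    obtain ⟨i0, hi0⟩ : ∃ i, ρ' i = 0 := by
      refine ⟨ρ.symm ⟨0, Finset.mem_insert_self _ _⟩, ?_⟩
      show ((ρ (ρ.symm ⟨0, Finset.mem_insert_self 0 T⟩) : {x // x ∈ T'}) : ℝ) = 0
      rw [OrderIso.apply_symm_apply]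
    rw [hval]
    exact Finset.prod_eq_zero (Finset.mem_univ i0) (by rw [hi0, sub_zero])
  -- gap
  set gapS : Finset ℝ := Finset.image
      (fun p : Fin D × Fin D => if ρ' p.1 < ρ' p.2 then ρ' p.2 - ρ' p.1 else 1)
      Finset.univ with hgapS
  have hgapne : gapS.Nonempty :=
    ⟨_, Finset.mem_image_of_mem _ (Finset.mem_univ (⟨0, hDpos⟩, ⟨0, hDpos⟩))⟩
  set ε : ℝ := gapS.min' hgapne / 3 with hε
  have hεpos : 0 < ε := by
    rw [hε]
    have : 0 < gapS.min' hgapne := by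
      obtain ⟨p, _, hp⟩ := Finset.mem_image.1 (gapS.min'_mem hgapne)
      rw [← hp]; split
      · linarith [sub_pos.2 (by assumption : ρ' p.1 < ρ' p.2)]
      · norm_num
    linarith
  have hgap : ∀ i j, ρ' i < ρ' j → 3 * ε ≤ ρ' j - ρ' i := by
    intro i j hij
    have hmem : ρ' j - ρ' i ∈ gapS := by
      rw [hgapS]
      refine Finset.mem_image.2 ⟨(i, j), Finset.mem_univ _, if_pos hij⟩
    have := gapS.min'_le _ hmem
    rw [hε] at *; linarith
  -- endpoint sign
  have hAB : ∀ i, eval (ρ' i - ε) h * eval (ρ' i + ε) h < 0 := by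
    intro i
    rw [hval, hval, ← Finset.prod_mul_distrib,
      ← Finset.mul_prod_erase Finset.univ _ (Finset.mem_univ i)]
    have hifact : (ρ' i - ε - ρ' i) * (ρ' i + ε - ρ' i) < 0 := by
      have : (ρ' i - ε - ρ' i) * (ρ' i + ε - ρ' i) = -(ε * ε) := by ring
      rw [this]; nlinarith
    refine mul_neg_of_neg_of_pos hifact (Finset.prod_pos ?_)
    intro j hj
    have hji : j ≠ i := Finset.ne_of_mem_erase hj
    rcases lt_or_gt_of_ne (fun e => hji (hρinj e)) with hlt | hgt
    · have := hgap j i hlt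
      have h1 : 0 < ρ' i - ε - ρ' j := by linarith
      have h2 : 0 < ρ' i + ε - ρ' j := by linarith
      exact mul_pos h1 h2
    · have := hgap i j hgt
      have h1 : ρ' i - ε - ρ' j < 0 := by linarith
      have h2 : ρ' i + ε - ρ' j < 0 := by linarith
      exact mul_pos_of_neg_of_neg h1 h2
  have hAne : ∀ i, eval (ρ' i - ε) h ≠ 0 := fun i => left_ne_zero_of_mul (hAB i).ne
  have hBne : ∀ i, eval (ρ' i + ε) h ≠ 0 := fun i => right_ne_zero_of_mul (hAB i).ne
  -- δ
  set δset : Finset ℝ := Finset.image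
      (fun i => min |eval (ρ' i - ε) h| |eval (ρ' i + ε) h|) Finset.univ with hδset
  have hδsetne : δset.Nonempty := ⟨_, Finset.mem_image_of_mem _ (Finset.mem_univ ⟨0, hDpos⟩)⟩
  set δ : ℝ := δset.min' hδsetne with hδdef
  have hδpos : 0 < δ := by
    obtain ⟨i, _, hi⟩ := Finset.mem_image.1 (δset.min'_mem hδsetne)
    rw [hδdef, ← hi]
    exact lt_min (abs_pos.2 (hAne i)) (abs_pos.2 (hBne i))
  have hδleA : ∀ i, δ ≤ |eval (ρ' i - ε) h| := fun i =>
    le_trans (δset.min'_le _ (Finset.mem_image_of_mem _ (Finset.mem_univ i))) (min_le_left _ _)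
  have hδleB : ∀ i, δ ≤ |eval (ρ' i + ε) h| := fun i =>
    le_trans (δset.min'_le _ (Finset.mem_image_of_mem _ (Finset.mem_univ i))) (min_le_right _ _)
  have hrooti : ∀ i, eval (ρ' i) h = 0 := by
    intro i; rw [hval]
    exact Finset.prod_eq_zero (Finset.mem_univ i) (sub_self _)
  have hcont : ∀ s : Set ℝ, ContinuousOn (fun x => eval x h) s :=
    fun s => (Polynomial.continuous h).continuousOn
  have hle1 : ∀ i, ρ' i - ε ≤ ρ' i := fun i => by linarith
  have hle2 : ∀ i, ρ' i ≤ ρ' i + ε := fun i => by linarith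
  -- existence of s-values (eval = δ)
  have hex : ∀ i, ∃ x ∈ Set.Icc (ρ' i - ε) (ρ' i + ε), eval x h = δ := by
    intro i
    rcases lt_or_ge 0 (eval (ρ' i + ε) h) with hpos | hneg
    · have hmem : δ ∈ Set.Icc (eval (ρ' i) h) (eval (ρ' i + ε) h) := by
        constructor
        · rw [hrooti i]; exact hδpos.le
        · have := hδleB i; rwa [abs_of_pos hpos] at this
      obtain ⟨x, hx, hxe⟩ := intermediate_value_Icc (hle2 i) (hcont _) hmem
      exact ⟨x, Set.Icc_subset_Icc_left (hle1 i) hx, hxe⟩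
    · have hApos : 0 < eval (ρ' i - ε) h := by nlinarith [hAB i]
      have hmem : δ ∈ Set.Icc (eval (ρ' i) h) (eval (ρ' i - ε) h) := by
        constructor
        · rw [hrooti i]; exact hδpos.le
        · have := hδleA i; rwa [abs_of_pos hApos] at this
      obtain ⟨x, hx, hxe⟩ := intermediate_value_Icc' (hle1 i) (hcont _) hmem
      exact ⟨x, Set.Icc_subset_Icc_right (hle2 i) hx, hxe⟩
  -- existence of t-values (eval = -δ)
  have hex' : ∀ i, ∃ x ∈ Set.Icc (ρ' i - ε) (ρ' i + ε), eval x h = -δ := by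
    intro i
    rcases lt_or_ge (eval (ρ' i + ε) h) 0 with hneg | hpos
    · have hmem : -δ ∈ Set.Icc (eval (ρ' i + ε) h) (eval (ρ' i) h) := by
        constructor
        · have := hδleB i; rw [abs_of_neg hneg] at this; linarith
        · rw [hrooti i]; linarith
      obtain ⟨x, hx, hxe⟩ := intermediate_value_Icc' (hle2 i) (hcont _) hmem
      exact ⟨x, Set.Icc_subset_Icc_left (hle1 i) hx, hxe⟩
    · have hAneg : eval (ρ' i - ε) h < 0 := by
        rcases (hBne i).lt_or_gt with hb | hb
        · exact absurd hb (not_lt.2 hpos)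
        · nlinarith [hAB i]
      have hmem : -δ ∈ Set.Icc (eval (ρ' i - ε) h) (eval (ρ' i) h) := by
        constructor
        · have := hδleA i; rw [abs_of_neg hAneg] at this; linarith
        · rw [hrooti i]; linarith
      obtain ⟨x, hx, hxe⟩ := intermediate_value_Icc (hle1 i) (hcont _) hmem
      exact ⟨x, Set.Icc_subset_Icc_right (hle2 i) hx, hxe⟩
  choose s hsmem hseval using hex
  choose t htmem hteval using hex'
  -- separation of intervals
  have hsep : ∀ (i j : Fin D), i ≠ j →
      ∀ x ∈ Set.Icc (ρ' i - ε) (ρ' i + ε), ∀ y ∈ Set.Icc (ρ' j - ε) (ρ' j + ε), x ≠ y := by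
    intro i j hij x hx y hy
    rcases lt_or_gt_of_ne (fun e => hij (hρinj e)) with hlt | hgt
    · have := hgap i j hlt
      have : x < y := by
        calc x ≤ ρ' i + ε := hx.2
        _ < ρ' j - ε := by linarith
        _ ≤ y := hy.1
      exact this.ne
    · have := hgap j i hgt
      have : y < x := by
        calc y ≤ ρ' j + ε := hy.2
        _ < ρ' i - ε := by linarith
        _ ≤ x := hx.1
      exact this.ne'
  have hsinj : Function.Injective s := by
    intro i j hij
    by_contra hne
    exact hsep i j hne _ (hsmem i) _ (hsmem j) hij
  have htinj : Function.Injective t := by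
    intro i j hij
    by_contra hne
    exact hsep i j hne _ (htmem i) _ (htmem j) hij
  have hst : ∀ i j, s i ≠ t j := by
    intro i j he
    have h1 := hseval i
    rw [he, hteval j] at h1
    linarith
  have hs0 : ∀ i, s i ≠ 0 := by
    intro i he
    have : δ = 0 := by rw [← hseval i, he, hzero]
    exact hδpos.ne' this
  have ht0 : ∀ i, t i ≠ 0 := by
    intro i he
    have : -δ = 0 := by rw [← hteval i, he, hzero]
    linarith
  -- factorizations of h ∓ δ
  have hmonicsub : ∀ d : ℝ, (h - C d).Monic := by
    intro d
    have hlt : degree (-(C d)) < degree h := by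
      apply lt_of_le_of_lt (le_trans (le_of_eq (degree_neg (C d))) degree_C_le)
      rw [degree_eq_natDegree hhmonic.ne_zero, hhdeg]
      exact_mod_cast hDpos
    have := hhmonic.add_of_left hlt
    simpa [sub_eq_add_neg] using this
  have hP1 : h - C δ = ∏ i, (X - C (s i)) :=
    eq_prod_of_roots _ (hmonicsub δ) (by rw [natDegree_sub_C, hhdeg]) s hsinj
      (fun i => by rw [eval_sub, eval_C, hseval i, sub_self])
  have hP2 : h + C δ = ∏ i, (X - C (t i)) := by
    have := eq_prod_of_roots (h - C (-δ)) (hmonicsub (-δ))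
      (by rw [natDegree_sub_C, hhdeg]) t htinj
      (fun i => by rw [eval_sub, eval_C, hteval i, sub_self])
    simpa [map_neg, sub_neg_eq_add] using this
  have hprod_s : ∏ i, (0 - s i) = -δ := by
    have he : eval 0 (h - C δ) = ∏ i, (0 - s i) := by rw [hP1, eval_prod]; simp
    rw [← he, eval_sub, eval_C, hzero, zero_sub]
  have hprod_t : ∏ i, (0 - t i) = δ := by
    have he : eval 0 (h + C δ) = ∏ i, (0 - t i) := by rw [hP2, eval_prod]; simp
    rw [← he, eval_add, eval_C, hzero, zero_add]
  -- the controls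
  set c : ℕ → ℝ := fun k =>
    if hk : k < D then -(s ⟨k, hk⟩)⁻¹ else if hk2 : k - D < D then -(t ⟨k - D, hk2⟩)⁻¹ else 1
    with hc
  set v : ℕ → ℝ := fun k =>
    if hk : k < D then s ⟨k, hk⟩ else if hk2 : k - D < D then t ⟨k - D, hk2⟩ else 1
    with hv
  have hcv : ∀ k, c k = -(v k)⁻¹ ∨ (¬ k < D ∧ ¬ k - D < D) := by
    intro k
    rw [hc, hv]; dsimp only
    by_cases h1 : k < D
    · left; rw [dif_pos h1, dif_pos h1]
    · by_cases h2 : k - D < D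
      · left; rw [dif_neg h1, dif_neg h1, dif_pos h2, dif_pos h2]
      · right; exact ⟨h1, h2⟩
  have hv0 : ∀ k, k < D + D → v k ≠ 0 := by
    intro k hk
    rw [hv]; dsimp only
    by_cases h1 : k < D
    · rw [dif_pos h1]; exact hs0 _
    · rw [dif_neg h1, dif_pos (by omega : k - D < D)]; exact ht0 _
  have hvinj : ∀ j, j < D + D → ∀ k, k < D + D → j ≠ k → v j ≠ v k := by
    intro j hj k hk hjk
    rw [hv]; dsimp only
    by_cases h1 : j < D <;> by_cases h2 : k < D
    · rw [dif_pos h1, dif_pos h2]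
      intro he
      exact hjk (by simpa using congrArg (fun (i : Fin D) => (i : ℕ)) (hsinj he))
    · rw [dif_pos h1, dif_neg h2, dif_pos (by omega : k - D < D)]
      exact hst _ _
    · rw [dif_neg h1, dif_pos (by omega : j - D < D), dif_pos h2]
      exact fun he => hst _ _ he.symm
    · rw [dif_neg h1, dif_pos (by omega : j - D < D), dif_neg h2,
        dif_pos (by omega : k - D < D)]
      intro he
      have := congrArg (fun (i : Fin D) => (i : ℕ)) (htinj he)
      simp at this
      omega
  have hfac : ∀ x : ℝ, x ≠ 0 → (1:ℝ[X]) + C (-x⁻¹) * X = C (-x⁻¹) * (X - C x) := by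
    intro x hx
    rw [mul_sub, ← C_mul, show -x⁻¹ * x = -1 by field_simp]
    simp [map_neg]
    ring
  refine ⟨D + D, c, hdegD, ?_, ?_, ?_⟩
  · intro k hk
    rcases hcv k with he | ⟨h1, h2⟩
    · rw [he]
      exact neg_ne_zero.2 (inv_ne_zero (hv0 k hk))
    · exact absurd hk (by omega)
  · intro j hj k hk hjk
    rcases hcv j with hej | ⟨h1, h2⟩
    · rcases hcv k with hek | ⟨h1, h2⟩
      · rw [hej, hek]
        intro he
        exact hvinj j hj k hk hjk (inv_injective (neg_injective he))
      · exact absurd hk (by omega)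
    · exact absurd hj (by omega)
  · -- divisibility
    have hsplit2 : ∏ k ∈ Finset.range (D + D), ((1:ℝ[X]) + C (c k) * X)
        = (∏ i : Fin D, ((1:ℝ[X]) + C (-(s i)⁻¹) * X))
          * ∏ i : Fin D, ((1:ℝ[X]) + C (-(t i)⁻¹) * X) := by
      rw [Finset.prod_range_add]
      congr 1
      · rw [Finset.prod_range]
        refine Finset.prod_congr rfl (fun i _ => ?_)
        rw [hc]; dsimp only
        rw [dif_pos i.isLt]
      · rw [Finset.prod_range]
        refine Finset.prod_congr rfl (fun i _ => ?_)
        rw [hc]; dsimp only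
        simp only [Nat.add_sub_cancel_left]
        rw [dif_neg (by omega : ¬ D + (i:ℕ) < D), dif_pos i.isLt]
    have hinv_s : ∏ i : Fin D, (-(s i)⁻¹) = (-δ)⁻¹ := by
      rw [← hprod_s, ← Finset.prod_inv_distrib]
      exact Finset.prod_congr rfl (fun i _ => by rw [zero_sub, inv_neg])
    have hinv_t : ∏ i : Fin D, (-(t i)⁻¹) = δ⁻¹ := by
      rw [← hprod_t, ← Finset.prod_inv_distrib]
      refine Finset.prod_congr rfl (fun i _ => by rw [zero_sub, inv_neg])
    have hhalf1 : ∏ i : Fin D, ((1:ℝ[X]) + C (-(s i)⁻¹) * X) = C ((-δ)⁻¹) * (h - C δ) := by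
      rw [Finset.prod_congr rfl (fun i _ => hfac _ (hs0 i)), Finset.prod_mul_distrib,
        ← map_prod, hinv_s, hP1]
    have hhalf2 : ∏ i : Fin D, ((1:ℝ[X]) + C (-(t i)⁻¹) * X) = C (δ⁻¹) * (h + C δ) := by
      rw [Finset.prod_congr rfl (fun i _ => hfac _ (ht0 i)), Finset.prod_mul_distrib,
        ← map_prod, hinv_t, hP2]
    have hq : ((-δ)⁻¹ : ℝ) * δ⁻¹ = -(δ*δ)⁻¹ := by
      rw [inv_neg, mul_inv]; ring
    have hqd : (-(δ*δ)⁻¹ : ℝ) * (δ*δ) = -1 := by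
      field_simp
    have hCq : C ((-δ)⁻¹) * C (δ⁻¹) = C (-(δ*δ)⁻¹) := by rw [← C_mul, hq]
    have hC1 : C (-(δ*δ)⁻¹) * (C δ * C δ) = (-1 : ℝ[X]) := by
      rw [← C_mul, ← C_mul, hqd]; simp
    obtain ⟨w, hw⟩ := hdvd
    refine ⟨C (-(δ*δ)⁻¹) * w, ?_⟩
    rw [hsplit2, hhalf1, hhalf2]
    calc C ((-δ)⁻¹) * (h - C δ) * (C (δ⁻¹) * (h + C δ)) - 1
        = C ((-δ)⁻¹) * C (δ⁻¹) * (h*h) - C ((-δ)⁻¹) * C (δ⁻¹) * (C δ * C δ) - 1 := by ring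
      _ = C (-(δ*δ)⁻¹) * (h*h) - (-1) - 1 := by rw [hCq, hC1]
      _ = C (-(δ*δ)⁻¹) * (h*h) := by ring
      _ = χ * (C (-(δ*δ)⁻¹) * w) := by rw [hw]; ring


lemma mulVec_eq_zero_of_isUnit {n : ℕ} {G : Matrix (Fin n) (Fin n) ℝ} (hG : IsUnit G)
    {w : Fin n → ℝ} (hw : G.mulVec w = 0) : w = 0 := by
  have hd : IsUnit G.det := (Matrix.isUnit_iff_isUnit_det G).1 hG
  calc w = ((G⁻¹ * G)).mulVec w := by rw [Matrix.nonsing_inv_mul G hd, Matrix.one_mulVec]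
    _ = G⁻¹.mulVec (G.mulVec w) := by rw [← Matrix.mulVec_mulVec]
    _ = 0 := by rw [hw, Matrix.mulVec_zero]

lemma sum_smul_mulVec {n : ℕ} {ι : Type*} (s : Finset ι) (M : ι → Matrix (Fin n) (Fin n) ℝ)
    (v : ι → ℝ) (ξ : Fin n → ℝ) :
    (∑ j ∈ s, v j • M j).mulVec ξ = ∑ j ∈ s, v j • (M j).mulVec ξ := by
  funext i
  simp only [Matrix.mulVec, dotProduct, Finset.sum_apply, Pi.smul_apply, smul_eq_mul,
    Matrix.sum_apply, Matrix.smul_apply, Finset.sum_mul, Finset.mul_sum]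
  rw [Finset.sum_comm]
  exact Finset.sum_congr rfl fun j _ => Finset.sum_congr rfl fun k _ => by ring

lemma detW_ne_zero {n : ℕ} (hn : 1 ≤ n) (B : Matrix (Fin n) (Fin n) ℝ) (hdet : B.det ≠ 0)
    (ξ : Fin n → ℝ) (hξ : (ctrlMat B ξ).det ≠ 0)
    (l : ℕ) (hl : n ≤ l) (c : ℕ → ℝ) (hc0 : ∀ k < l, c k ≠ 0)
    (hcinj : ∀ j < l, ∀ k < l, j ≠ k → c j ≠ c k)
    (hprod : aeval B (∏ k ∈ Finset.range l, (1 + C (c k) * X)) = 1) :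
    (Matrix.of fun i (j : Fin n) =>
      ((aeval B (X * ∏ k ∈ (Finset.range l).erase (j:ℕ), (1 + C (c k) * X))).mulVec ξ) i).det
      ≠ 0 := by
  classical
  set W : Matrix (Fin n) (Fin n) ℝ := Matrix.of fun i (j : Fin n) =>
      ((aeval B (X * ∏ k ∈ (Finset.range l).erase (j:ℕ), (1 + C (c k) * X))).mulVec ξ) i with hW
  intro hdW
  obtain ⟨v, hv0, hvker⟩ := (Matrix.exists_mulVec_eq_zero_iff).2 hdW
  -- partial products are units
  have hu : ∀ S : Finset ℕ, S ⊆ Finset.range l →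
      IsUnit (aeval B (∏ k ∈ S, (1 + C (c k) * X))) := by
    intro S hS
    have hsplit : (∏ k ∈ S, (1 + C (c k) * X)) * ∏ k ∈ Finset.range l \ S, (1 + C (c k) * X)
        = ∏ k ∈ Finset.range l, (1 + C (c k) * X) := by
      rw [mul_comm]; exact Finset.prod_sdiff hS
    have h1 : aeval B (∏ k ∈ S, (1 + C (c k) * X))
        * aeval B (∏ k ∈ Finset.range l \ S, (1 + C (c k) * X)) = 1 := by
      rw [← _root_.map_mul, hsplit, hprod]
    letI := invertibleOfRightInverse _ _ h1
    exact isUnit_of_invertible _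
  have hBu : IsUnit B := (Matrix.isUnit_iff_isUnit_det B).2 (Ne.isUnit hdet)
  -- rewrite kernel equation
  have hker2 : ∑ j : Fin n, v j •
      (aeval B (X * ∏ k ∈ (Finset.range l).erase (j:ℕ), (1 + C (c k) * X))).mulVec ξ = 0 := by
    rw [← hvker]
    funext i
    simp only [Matrix.mulVec, dotProduct, Finset.sum_apply, Pi.smul_apply,
      smul_eq_mul, hW, Matrix.of_apply]
    exact Finset.sum_congr rfl (fun j _ => mul_comm _ _)
  -- factor out the common part
  set G : Matrix (Fin n) (Fin n) ℝ :=
    aeval B (X * ∏ k ∈ Finset.range l \ Finset.range n, (1 + C (c k) * X)) with hG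
  have hGu : IsUnit G := by
    rw [hG, _root_.map_mul, aeval_X]
    exact hBu.mul (hu _ Finset.sdiff_subset)
  have herase : ∀ j : Fin n, (Finset.range l).erase (j:ℕ)
      = ((Finset.range n).erase (j:ℕ)) ∪ (Finset.range l \ Finset.range n) := by
    intro j
    have hj : (j:ℕ) < n := j.isLt
    ext k
    simp only [Finset.mem_erase, Finset.mem_union, Finset.mem_sdiff, Finset.mem_range]
    omega
  have hdisj : ∀ j : Fin n,
      Disjoint ((Finset.range n).erase (j:ℕ)) (Finset.range l \ Finset.range n) := by
    intro j
    rw [Finset.disjoint_left]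
    intro k hk1 hk2
    simp only [Finset.mem_erase, Finset.mem_range] at hk1
    simp only [Finset.mem_sdiff, Finset.mem_range] at hk2
    omega
  set r : ℝ[X] := ∑ j : Fin n, v j • ∏ k ∈ (Finset.range n).erase (j:ℕ), (1 + C (c k) * X)
    with hr
  have hfact : ∀ j : Fin n,
      aeval B (X * ∏ k ∈ (Finset.range l).erase (j:ℕ), (1 + C (c k) * X))
        = G * aeval B (∏ k ∈ (Finset.range n).erase (j:ℕ), (1 + C (c k) * X)) := by
    intro j
    rw [hG, ← _root_.map_mul]
    congr 1
    rw [herase j, Finset.prod_union (hdisj j)]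
    ring
  have hker3 : G.mulVec ((aeval B r).mulVec ξ) = 0 := by
    have e1 : (aeval B r) = ∑ j : Fin n,
        v j • aeval B (∏ k ∈ (Finset.range n).erase (j:ℕ), (1 + C (c k) * X)) := by
      rw [hr, map_sum]
      exact Finset.sum_congr rfl (fun j _ => map_smul (aeval B) _ _)
    rw [e1, sum_smul_mulVec, ← hker2]
    have e2 := map_sum G.mulVecLin
      (fun j : Fin n => v j • (aeval B (∏ k ∈ (Finset.range n).erase (j:ℕ),
        (1 + C (c k) * X))).mulVec ξ) Finset.univ
    simp only [Matrix.mulVecLin_apply, _root_.map_smul] at e2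
    rw [e2]
    refine Finset.sum_congr rfl (fun j _ => ?_)
    rw [hfact j, Matrix.mulVec_mulVec]
  have hrv0 : (aeval B r).mulVec ξ = 0 := mulVec_eq_zero_of_isUnit hGu hker3
  -- degree bound on r
  have hf1 : ∀ a : ℝ, ((1:ℝ[X]) + C a * X).natDegree ≤ 1 := by
    intro a
    refine le_trans (natDegree_add_le _ _) (max_le (by simp) ?_)
    exact le_trans natDegree_mul_le (by simp)
  have hdeg_r : r.natDegree < n := by
    have hstep : ∀ j : Fin n,
        (v j • ∏ k ∈ (Finset.range n).erase (j:ℕ), (1 + C (c k) * X)).natDegree ≤ n - 1 := by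
      intro j
      refine le_trans (natDegree_smul_le _ _) (le_trans (natDegree_prod_le _ _) ?_)
      calc ∑ k ∈ (Finset.range n).erase (j:ℕ), ((1:ℝ[X]) + C (c k) * X).natDegree
          ≤ ∑ k ∈ (Finset.range n).erase (j:ℕ), 1 :=
            Finset.sum_le_sum (f := fun k => ((1:ℝ[X]) + C (c k) * X).natDegree)
              (fun k _ => hf1 _)
        _ = ((Finset.range n).erase (j:ℕ)).card := by simp
        _ = n - 1 := by
            rw [Finset.card_erase_of_mem (Finset.mem_range.2 j.isLt), Finset.card_range]
    have := natDegree_sum_le_of_forall_le Finset.univ _ (fun j (_ : j ∈ Finset.univ) => hstep j)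
    rw [← hr] at this
    omega
  -- coefficients vanish
  have e3 : aeval B r = ∑ i ∈ Finset.range n, r.coeff i • B ^ i := aeval_eq_sum_range' hdeg_r B
  have e4 : (ctrlMat B ξ).mulVec (fun i : Fin n => r.coeff i) = 0 := by
    rw [← hrv0, e3]
    have e5 : (∑ i ∈ Finset.range n, r.coeff i • B ^ i)
        = ∑ i : Fin n, r.coeff (i:ℕ) • B ^ (i:ℕ) := Finset.sum_range _
    rw [e5, sum_smul_mulVec]
    funext i
    simp only [ctrlMat, Matrix.mulVec, dotProduct, Matrix.of_apply, Finset.sum_apply,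
      Pi.smul_apply, smul_eq_mul]
    exact Finset.sum_congr rfl (fun j _ => mul_comm _ _)
  have hctrlu : IsUnit (ctrlMat B ξ) := (Matrix.isUnit_iff_isUnit_det _).2 (Ne.isUnit hξ)
  have hw0 : (fun i : Fin n => r.coeff i) = 0 := mulVec_eq_zero_of_isUnit hctrlu e4
  have hr0 : r = 0 := by
    ext i
    rcases lt_or_ge i n with hi | hi
    · simpa using congrFun hw0 ⟨i, hi⟩
    · simp [coeff_eq_zero_of_natDegree_lt (lt_of_lt_of_le hdeg_r hi)]
  -- contradiction: evaluate at -(c j)⁻¹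
  obtain ⟨j, hvj⟩ := Function.ne_iff.1 hv0
  apply hvj
  have hcj0 : c (j:ℕ) ≠ 0 := hc0 _ (lt_of_lt_of_le j.isLt hl)
  have heval : eval (-(c (j:ℕ))⁻¹) r = 0 := by rw [hr0, eval_zero]
  rw [hr, eval_finset_sum] at heval
  have hzero_terms : ∀ j' : Fin n, j' ≠ j → eval (-(c (j:ℕ))⁻¹)
      (v j' • ∏ k ∈ (Finset.range n).erase (j':ℕ), (1 + C (c k) * X)) = 0 := by
    intro j' hj'
    rw [eval_smul, smul_eq_mul]
    have hmem : (j:ℕ) ∈ (Finset.range n).erase (j':ℕ) :=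
      Finset.mem_erase.2 ⟨fun he => hj' (Fin.ext he.symm), Finset.mem_range.2 j.isLt⟩
    have hpe : eval (-(c (j:ℕ))⁻¹)
        (∏ k ∈ (Finset.range n).erase (j':ℕ), (1 + C (c k) * X)) = 0 := by
      rw [eval_prod]
      refine Finset.prod_eq_zero hmem ?_
      simp only [eval_add, eval_one, eval_mul, eval_C, eval_X]
      field_simp
      norm_num
    rw [hpe, mul_zero]
  have hsingle := Finset.sum_eq_single (s := Finset.univ)
    (f := fun j' : Fin n => eval (-(c (j:ℕ))⁻¹)
      (v j' • ∏ k ∈ (Finset.range n).erase (j':ℕ), (1 + C (c k) * X)))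
    j (fun j' _ hj' => hzero_terms j' hj') (fun habs => absurd (Finset.mem_univ _) habs)
  rw [hsingle] at heval
  simp only [eval_smul, smul_eq_mul] at heval
  rcases mul_eq_zero.1 heval with h | h
  · exact h
  · exfalso
    rw [eval_prod] at h
    obtain ⟨k, hkmem, hkz⟩ := Finset.prod_eq_zero_iff.1 h
    simp only [eval_add, eval_one, eval_mul, eval_C, eval_X] at hkz
    have hkn : k ∈ Finset.range n := (Finset.mem_erase.1 hkmem).2
    have hkj : k ≠ (j:ℕ) := (Finset.mem_erase.1 hkmem).1
    have hkl : k < l := lt_of_lt_of_le (Finset.mem_range.1 hkn) hl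
    have hck : c k ≠ 0 := hc0 _ hkl
    have hceq : c k = c (j:ℕ) := by
      field_simp at hkz
      linarith
    exact hcinj k hkl (j:ℕ) (lt_of_lt_of_le j.isLt hl) hkj hceq


end Stmt6Aux

/-- under the near-controllability conditions on `B`, every `ξ` with
`det [ξ, Bξ, …, B^{n-1}ξ] ≠ 0` can be steered to every `η` sufficiently close to `ξ`. -/
theorem stmt6 {n : ℕ} (hn : 1 ≤ n) (B : Matrix (Fin n) (Fin n) ℝ)
    (hdet : B.det ≠ 0) (hcyc : minpoly ℝ B = B.charpoly)
    (hsplit : (B.charpoly.map (RingHom.id ℝ)).Splits)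
    (hmult : ∀ μ : ℝ, (minpoly ℝ B).rootMultiplicity μ ≤ 2)
    (ξ : Fin n → ℝ) (hξ : (ctrlMat B ξ).det ≠ 0) :
    ∃ ρ : ℝ, 0 < ρ ∧ ∀ η : Fin n → ℝ, ‖η - ξ‖ < ρ → steers B ξ η := by
  classical
  have hmonic : B.charpoly.Monic := Matrix.charpoly_monic B
  have hdegn : B.charpoly.natDegree = n := by
    rw [Matrix.charpoly_natDegree_eq_dim, Fintype.card_fin]
  have h0 : B.charpoly.eval 0 ≠ 0 := by
    rw [← coeff_zero_eq_eval_zero]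
    intro h
    apply hdet
    rw [Matrix.det_eq_sign_charpoly_coeff, h, mul_zero]
  have hmult' : ∀ μ : ℝ, B.charpoly.rootMultiplicity μ ≤ 2 := fun μ => by
    rw [← hcyc]; exact hmult μ
  obtain ⟨l, c, hln, hc0, hcinj, hdvd⟩ :=
    Stmt6Aux.exists_controls B.charpoly hmonic (by omega) h0 hsplit hmult'
  rw [hdegn] at hln
  have hprod1 : Polynomial.aeval B (∏ k ∈ Finset.range l, (1 + C (c k) * X)) = 1 := by
    obtain ⟨w, hw⟩ := hdvd
    have he : ∏ k ∈ Finset.range l, (1 + C (c k) * X) = B.charpoly * w + 1 :=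
      sub_eq_iff_eq_add.1 hw
    rw [he, map_add, _root_.map_mul, Matrix.aeval_self_charpoly, zero_mul, _root_.map_one,
      zero_add]
  set g : ℕ → ((Fin n → ℝ) →L[ℝ] ℝ) :=
    fun k => if h : k < n then ContinuousLinearMap.proj ⟨k, h⟩ else 0 with hgdef
  set W : Matrix (Fin n) (Fin n) ℝ := Matrix.of fun i (j : Fin n) =>
      ((Polynomial.aeval B (X * ∏ k ∈ (Finset.range l).erase (j:ℕ),
        (1 + C (c k) * X))).mulVec ξ) i with hWdef
  have hWdet : W.det ≠ 0 := Stmt6Aux.detW_ne_zero hn B hdet ξ hξ l hln.le c hc0 hcinj hprod1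
  set D : (Fin n → ℝ) →L[ℝ] ((Fin n → ℝ) →L[ℝ] (Fin n → ℝ)) :=
    ∑ k ∈ Finset.range l, (g k).smulRight
      (Stmt6Aux.psi (Polynomial.aeval B (X * ∏ j ∈ (Finset.range l).erase k,
        (1 + C (c j) * X)))) with hDdef
  have hIND := Stmt6Aux.IND B c g l
  set F : (Fin n → ℝ) → (Fin n → ℝ) :=
    fun a => (prodCtrl B l (fun k => c k + g k a)).mulVec ξ with hFdef
  set ev : ((Fin n → ℝ) →L[ℝ] (Fin n → ℝ)) →L[ℝ] (Fin n → ℝ) :=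
    ContinuousLinearMap.apply ℝ (Fin n → ℝ) ξ with hevdef
  have hFeq : F = fun a =>
      ev (Stmt6Aux.psi (Polynomial.aeval B
        (∏ k ∈ Finset.range l, (1 + C (c k + g k a) * X)))) := by
    funext a
    rw [hFdef]; dsimp only
    rw [Stmt6Aux.prodCtrl_eq_aeval]
    rfl
  have hFd : HasStrictFDerivAt F (ev.comp D) 0 := by
    rw [hFeq]
    exact (ev.hasStrictFDerivAt).comp 0 hIND
  letI hWinv : Invertible W := W.invertibleOfIsUnitDet (Ne.isUnit hWdet)
  set e : (Fin n → ℝ) ≃L[ℝ] (Fin n → ℝ) :=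
    (W.toLinearEquiv' hWinv).toContinuousLinearEquiv with hedef
  have hee : (e : (Fin n → ℝ) →L[ℝ] (Fin n → ℝ)) = ev.comp D := by
    refine ContinuousLinearMap.ext (fun a => ?_)
    have hLHS : (e : (Fin n → ℝ) →L[ℝ] (Fin n → ℝ)) a = W.mulVec a := rfl
    rw [hLHS, ContinuousLinearMap.comp_apply, hDdef]
    simp only [ContinuousLinearMap.coe_sum', Finset.sum_apply,
      ContinuousLinearMap.smulRight_apply]
    rw [map_sum ev _ (Finset.range l)]
    have h1 : ∀ k ∈ Finset.range l,
        ev (g k a • Stmt6Aux.psi (Polynomial.aeval B (X * ∏ j ∈ (Finset.range l).erase k,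
          (1 + C (c j) * X))))
        = g k a • (Polynomial.aeval B (X * ∏ j ∈ (Finset.range l).erase k,
            (1 + C (c j) * X))).mulVec ξ := by
      intro k _
      rw [_root_.map_smul]
      rfl
    rw [Finset.sum_congr rfl h1]
    have h2 : ∑ k ∈ Finset.range l, g k a • (Polynomial.aeval B
          (X * ∏ j ∈ (Finset.range l).erase k, (1 + C (c j) * X))).mulVec ξ
        = ∑ k ∈ Finset.range n, g k a • (Polynomial.aeval B
          (X * ∏ j ∈ (Finset.range l).erase k, (1 + C (c j) * X))).mulVec ξ := by
      refine (Finset.sum_subset (Finset.range_subset_range.2 hln.le) ?_).symm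
      intro k _ hknot
      have hkn : ¬ k < n := by simpa [Finset.mem_range] using hknot
      rw [hgdef]; dsimp only
      rw [dif_neg hkn]
      simp
    rw [h2, Finset.sum_range]
    funext i
    simp only [Matrix.mulVec, dotProduct, Finset.sum_apply, Pi.smul_apply, smul_eq_mul,
      hWdef, Matrix.of_apply]
    refine Finset.sum_congr rfl (fun j _ => ?_)
    have hgj : g (j:ℕ) a = a j := by
      rw [hgdef]; dsimp only
      rw [dif_pos j.isLt]
      simp
    rw [hgj, mul_comm]
  have hFd' : HasStrictFDerivAt F (e : (Fin n → ℝ) →L[ℝ] (Fin n → ℝ)) 0 := by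
    rw [hee]; exact hFd
  have hmap := hFd'.map_nhds_eq_of_equiv
  have hF0 : F 0 = ξ := by
    rw [hFeq]; dsimp only
    simp only [map_zero, add_zero]
    rw [hprod1, Stmt6Aux.psi_one]
    rfl
  rw [hF0] at hmap
  have hrange : Set.range F ∈ nhds ξ := by
    rw [← hmap]
    refine Filter.mem_map.2 ?_
    have he2 : F ⁻¹' Set.range F = Set.univ :=
      Set.eq_univ_of_forall (fun a => Set.mem_range_self a)
    rw [he2]
    exact Filter.univ_mem
  obtain ⟨ρ, hρ, hball⟩ := Metric.mem_nhds_iff.1 hrange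
  refine ⟨ρ, hρ, fun η hη => ?_⟩
  obtain ⟨a, ha⟩ := hball (mem_ball_iff_norm.2 hη)
  refine ⟨l, by omega, fun k => c k + g k a, ?_⟩
  show F a = η
  exact ha
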